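/- For fixed t > 0, τ > 0, α, μ > 0 and integer ν ≥ 2 with t - ντ > 0, the unique critical point of f(ℓ) = ℓ·(1 - exp(-(αμ/ℓ)(t - ℓ/μ - τν))) on (0, ∞) is ℓ* = -αμ(t - ντ)/(W₋₁(-e^{-(1+α)}) + 1), where W₋₁ is the lower real branch of the Lambert W function; i.e., f'(ℓ*) = 0. -/

import Mathlib

lemma lambert_inj : ∀ u ∈ Set.Iic (-1:ℝ), ∀ v ∈ Set.Iic (-1:ℝ),
    u * Real.exp u = v * Real.exp v → u = v := by
  have h : StrictAntiOn (fun u : ℝ => u * Real.exp u) (Set.Iic (-1)) := by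
    apply strictAntiOn_of_deriv_neg (convex_Iic _)
    · exact (continuous_id.mul Real.continuous_exp).continuousOn
    · intro x hx
      rw [interior_Iic] at hx
      have hd : HasDerivAt (fun u : ℝ => u * Real.exp u) ((1 + x) * Real.exp x) x := by
        have := (hasDerivAt_id x).mul (Real.hasDerivAt_exp x)
        refine this.congr_deriv ?_
        simp [id]
        ring
      rw [hd.deriv]
      have hx1 : 1 + x < 0 := by have := hx.out; linarith
      exact mul_neg_of_neg_of_pos hx1 (Real.exp_pos x)
  exact fun u hu v hv h' => h.injOn hu hv h'

/-- The unique critical point of f(ℓ) = ℓ(1 - exp(-(αμ/ℓ)(t - ℓ/μ - τν))) on (0, ∞) is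
ℓ* = -αμ(t - ντ)/(W₋₁(-e^{-(1+α)}) + 1), where the Lambert W value `w = W₋₁(-e^{-(1+α)})`
is characterized by w ≤ -1 and w·e^w = -e^{-(1+α)}. -/
theorem stmt_4 (t τ α μ w : ℝ) (ν : ℕ) (ht : 0 < t) (hτ : 0 < τ) (hν : 2 ≤ ν)
    (hα : 0 < α) (hμ : 0 < μ) (hs : 0 < t - ν * τ)
    (hw : w ≤ -1) (hwe : w * Real.exp w = -Real.exp (-(1 + α))) :
    deriv (fun ℓ : ℝ => ℓ * (1 - Real.exp (-(α * μ / ℓ) * (t - ℓ / μ - τ * ν))))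
        (-(α * μ * (t - ν * τ)) / (w + 1)) = 0 ∧
    ∀ ℓ : ℝ, 0 < ℓ →
      (deriv (fun ℓ : ℝ => ℓ * (1 - Real.exp (-(α * μ / ℓ) * (t - ℓ / μ - τ * ν)))) ℓ = 0 ↔
        ℓ = -(α * μ * (t - ν * τ)) / (w + 1)) := by
  set c := α * μ * (t - ν * τ) with hc_def
  have hc : 0 < c := by
    apply mul_pos (mul_pos hα hμ) hs
  have hwlt : w < -1 := by
    rcases hw.lt_or_eq with h | h
    · exact h
    · exfalso
      rw [h] at hwe
      have : Real.exp (-1) = Real.exp (-(1 + α)) := by linarith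
      have := Real.exp_injective this
      linarith
  have hw1 : w + 1 < 0 := by linarith
  have hw1ne : w + 1 ≠ 0 := ne_of_lt hw1
  have hl : 0 < -c / (w + 1) := div_pos_of_neg_of_neg (by linarith) hw1
  -- derivative formula
  have hderiv : ∀ ℓ : ℝ, 0 < ℓ →
      deriv (fun ℓ : ℝ => ℓ * (1 - Real.exp (-(α * μ / ℓ) * (t - ℓ / μ - τ * ν)))) ℓ
        = 1 - Real.exp (α - c / ℓ) * (1 + c / ℓ) := by
    intro ℓ hℓ
    have hne : ℓ ≠ 0 := ne_of_gt hℓ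
    have hg : HasDerivAt (fun x : ℝ => x * (1 - Real.exp (α - c / x)))
        (1 - Real.exp (α - c / ℓ) * (1 + c / ℓ)) ℓ := by
      have h1 : HasDerivAt (fun x : ℝ => α - c / x) (c / ℓ ^ 2) ℓ := by
        have h := ((hasDerivAt_inv hne).const_mul c).const_sub α
        simp only [div_eq_mul_inv]
        refine h.congr_deriv ?_
        ring
      have h2 : HasDerivAt (fun x : ℝ => Real.exp (α - c / x))
          (Real.exp (α - c / ℓ) * (c / ℓ ^ 2)) ℓ :=
        (Real.hasDerivAt_exp _).comp ℓ h1
      have h3 := (hasDerivAt_id ℓ).mul ((hasDerivAt_const ℓ (1:ℝ)).sub h2)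
      refine h3.congr_deriv ?_
      simp only [id, Pi.sub_apply]
      field_simp
      ring
    have heq : (fun ℓ : ℝ => ℓ * (1 - Real.exp (-(α * μ / ℓ) * (t - ℓ / μ - τ * ν))))
        =ᶠ[nhds ℓ] (fun x : ℝ => x * (1 - Real.exp (α - c / x))) := by
      filter_upwards [eventually_ne_nhds hne] with x hx
      have : -(α * μ / x) * (t - x / μ - τ * ν) = α - c / x := by
        rw [hc_def]
        field_simp
        ring
      rw [this]
    rw [heq.deriv_eq, hg.deriv]
  -- key equivalence
  have hkey : ∀ ℓ : ℝ, 0 < ℓ →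
      (Real.exp (α - c / ℓ) * (1 + c / ℓ) = 1 ↔ ℓ = -c / (w + 1)) := by
    intro ℓ hℓ
    have hne : ℓ ≠ 0 := ne_of_gt hℓ
    set x := c / ℓ with hx
    have hxpos : 0 < x := div_pos hc hℓ
    constructor
    · intro h
      have h1 : 1 + x = (Real.exp (α - x))⁻¹ := eq_inv_of_mul_eq_one_right h
      have h1' : 1 + x = Real.exp (x - α) := by
        rw [h1, ← Real.exp_neg]; congr 1; ring
      have hu : (-(1+x)) * Real.exp (-(1+x)) = w * Real.exp w := by
        rw [hwe]
        calc (-(1+x)) * Real.exp (-(1+x))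
            = -(Real.exp (x - α) * Real.exp (-(1+x))) := by rw [← h1']; ring
          _ = -Real.exp (-(1+α)) := by rw [← Real.exp_add]; congr 1; ring
      have huw : -(1+x) = w :=
        lambert_inj _ (by simp only [Set.mem_Iic]; linarith) _ (by simpa using hw) hu
      have hcl : c / ℓ = -(w+1) := by rw [← hx]; linarith
      field_simp at hcl
      field_simp
      linarith
    · intro h
      have hcl : c / ℓ = -(w+1) := by
        rw [div_eq_iff hne, h]
        field_simp
      rw [← hx] at *
      rw [hcl]
      have e1 : Real.exp (α - -(w+1)) = Real.exp (1 + α) * Real.exp w := by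
        rw [show α - -(w+1) = (1 + α) + w by ring, Real.exp_add]
      rw [e1]
      have e2 : Real.exp (1 + α) * Real.exp (-(1+α)) = 1 := by
        rw [← Real.exp_add, show (1 + α) + -(1+α) = 0 by ring, Real.exp_zero]
      linear_combination (-Real.exp (1+α)) * hwe + e2
  constructor
  · rw [hderiv _ hl]
    have := (hkey _ hl).mpr rfl
    linarith
  · intro ℓ hℓ
    rw [hderiv _ hℓ]
    constructor
    · intro h
      exact (hkey _ hℓ).mp (by linarith)
    · intro h
      have := (hkey _ hℓ).mpr h
      linarith
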